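/- Let Q ∈ ℝ[X_1,…,X_n] be homogeneous of degree d and let N ≥ d. Then for every probability distribution p on [n], the expectation over an N-sample from p of U_N Q applied to the fingerprint Φ equals Q(p): E[U_N Q(Φ)] = Q(p_1,…,p_n). (In particular, U_N Q is an unbiased estimator for Q(p).) -/

import Mathlib

open Finset

/-- The fingerprint of a sample tuple: the count of occurrences of each element. -/
def fingerprint {N n : ℕ} (s : Fin N → Fin n) : Fin n → ℕ :=
  fun i => (Finset.univ.filter fun j => s j = i).card

lemma desc_rec (m k : ℕ) :
    (m+1).descFactorial k = m.descFactorial k + k * m.descFactorial (k-1) := by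
  cases k with
  | zero => simp
  | succ k =>
      rw [Nat.succ_descFactorial_succ, Nat.descFactorial_succ]
      rcases le_or_gt k m with h | h
      · have : m + 1 = (m - k) + (k + 1) := by omega
        rw [this, add_mul]
        simp [Nat.add_comm]
      · have h0 : m.descFactorial k = 0 := (Nat.descFactorial_eq_zero_iff_lt).2 h
        simp [h0]

lemma fingerprint_cons {N n : ℕ} (i₀ : Fin n) (s : Fin N → Fin n) (i : Fin n) :
    fingerprint (Fin.cons i₀ s) i = (if i₀ = i then 1 else 0) + fingerprint s i := by
  unfold fingerprint
  rw [Finset.card_filter, Finset.card_filter, Fin.sum_univ_succ]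
  simp [Fin.cons_zero, Fin.cons_succ]

lemma prod_desc_cons {n : ℕ} (φ α : Fin n → ℕ) (i₀ : Fin n) :
    ∏ i, ((if i₀ = i then 1 else 0) + φ i).descFactorial (α i)
    = (∏ i, (φ i).descFactorial (α i))
      + α i₀ * ∏ i, (φ i).descFactorial (Function.update α i₀ (α i₀ - 1) i) := by
  have e1 : ∏ i, ((if i₀ = i then 1 else 0) + φ i).descFactorial (α i)
      = (φ i₀ + 1).descFactorial (α i₀) *
          ∏ i ∈ univ.erase i₀, (φ i).descFactorial (α i) := by
    rw [← Finset.mul_prod_erase univ _ (mem_univ i₀)]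
    congr 1
    · simp [Nat.add_comm]
    · exact Finset.prod_congr rfl fun i hi => by
        rw [if_neg (Ne.symm (Finset.mem_erase.1 hi).1), Nat.zero_add]
  have e2 : ∏ i, (φ i).descFactorial (Function.update α i₀ (α i₀ - 1) i)
      = (φ i₀).descFactorial (α i₀ - 1) *
          ∏ i ∈ univ.erase i₀, (φ i).descFactorial (α i) := by
    rw [← Finset.mul_prod_erase univ _ (mem_univ i₀), Function.update_self]
    congr 1
    exact Finset.prod_congr rfl fun i hi => by
      rw [Function.update_of_ne (Finset.mem_erase.1 hi).1]
  rw [e1, e2, desc_rec, ← Finset.mul_prod_erase univ (fun i => (φ i).descFactorial (α i)) (mem_univ i₀)]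
  ring

lemma key {n : ℕ} (N : ℕ) (p : Fin n → ℝ) (hp1 : ∑ i, p i = 1) (α : Fin n → ℕ) :
    ∑ s : Fin N → Fin n, (∏ j, p (s j)) *
        ∏ i, ((fingerprint s i).descFactorial (α i) : ℝ)
    = (N.descFactorial (∑ i, α i) : ℝ) * ∏ i, p i ^ α i := by
  induction N generalizing α with
  | zero =>
      have hfp : ∀ (s : Fin 0 → Fin n) i, fingerprint s i = 0 := by
        intro s i; simp [fingerprint]
      rw [Fintype.sum_eq_single (fun x : Fin 0 => x.elim0)
        (by intro s hs; exact absurd (funext fun j => j.elim0) hs)]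
      by_cases h : ∀ i, α i = 0
      · have : ∑ i, α i = 0 := Finset.sum_eq_zero fun i _ => h i
        simp [hfp, this, h]
      · push_neg at h
        obtain ⟨i, hi⟩ := h
        have h1 : ((fingerprint (fun x : Fin 0 => x.elim0) i).descFactorial (α i) : ℝ) = 0 := by
          rw [hfp]
          obtain ⟨k, hk⟩ := Nat.exists_eq_succ_of_ne_zero hi
          simp [hk]
        have h2 : ∑ i, α i ≠ 0 := by
          intro h0
          exact hi (Finset.sum_eq_zero_iff.1 h0 i (mem_univ i))
        obtain ⟨m, hm⟩ := Nat.exists_eq_succ_of_ne_zero h2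
        rw [Finset.prod_eq_zero (mem_univ i) h1, hm]
        simp
  | succ N ih =>
      rw [← Equiv.sum_comp (Fin.consEquiv fun _ : Fin (N+1) => Fin n), Fintype.sum_prod_type]
      have step1 : ∀ i₀ : Fin n, ∀ s : Fin N → Fin n,
          (∏ j, p ((Fin.consEquiv fun _ : Fin (N+1) => Fin n) (i₀, s) j)) *
            ∏ i, ((fingerprint ((Fin.consEquiv fun _ : Fin (N+1) => Fin n) (i₀, s)) i).descFactorial (α i) : ℝ)
          = p i₀ * ((∏ j, p (s j)) * ∏ i, ((fingerprint s i).descFactorial (α i) : ℝ))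
            + p i₀ * (α i₀ : ℝ) * ((∏ j, p (s j)) *
                ∏ i, ((fingerprint s i).descFactorial (Function.update α i₀ (α i₀ - 1) i) : ℝ)) := by
        intro i₀ s
        have h1 : (∏ j, p ((Fin.cons i₀ s : Fin (N+1) → Fin n) j)) = p i₀ * ∏ j, p (s j) := by
          rw [Fin.prod_univ_succ]; simp
        have h2 : ∏ i, ((fingerprint (Fin.cons i₀ s : Fin (N+1) → Fin n) i).descFactorial (α i) : ℝ)
            = (∏ i, ((fingerprint s i).descFactorial (α i) : ℝ))
              + (α i₀ : ℝ) * ∏ i, ((fingerprint s i).descFactorial (Function.update α i₀ (α i₀ - 1) i) : ℝ) := by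
          simp only [fingerprint_cons]
          exact_mod_cast congrArg (fun m : ℕ => (m : ℝ)) (prod_desc_cons (fingerprint s) α i₀)
        have hc : (Fin.consEquiv fun _ : Fin (N+1) => Fin n) (i₀, s) = Fin.cons i₀ s := rfl
        rw [hc, h1, h2]
        ring
      simp only [step1]
      simp only [Finset.sum_add_distrib, ← Finset.mul_sum, ih]
      have step2 : ∀ i₀ : Fin n,
          p i₀ * (α i₀ : ℝ) *
            ((N.descFactorial (∑ i, Function.update α i₀ (α i₀ - 1) i) : ℝ) *
              ∏ i, p i ^ Function.update α i₀ (α i₀ - 1) i)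
          = (α i₀ : ℝ) * ((N.descFactorial ((∑ i, α i) - 1) : ℝ) * ∏ i, p i ^ α i) := by
        intro i₀
        by_cases hα0 : α i₀ = 0
        · simp [hα0]
        · have hsum : ∑ i, Function.update α i₀ (α i₀ - 1) i = (∑ i, α i) - 1 := by
            rw [Finset.sum_update_of_mem (mem_univ i₀)]
            have h := Finset.add_sum_erase univ α (mem_univ i₀)
            have h' : univ \ {i₀} = univ.erase i₀ := by
              rw [Finset.erase_eq]
            rw [h']
            omega
          have hprod : p i₀ * ∏ i, p i ^ Function.update α i₀ (α i₀ - 1) i = ∏ i, p i ^ α i := by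
            have hsplit : ∏ i, p i ^ Function.update α i₀ (α i₀ - 1) i
                = p i₀ ^ (α i₀ - 1) * ∏ i ∈ univ.erase i₀, p i ^ α i := by
              rw [← Finset.mul_prod_erase univ _ (mem_univ i₀), Function.update_self]
              congr 1
              exact Finset.prod_congr rfl fun i hi => by
                rw [Function.update_of_ne (Finset.mem_erase.1 hi).1]
            rw [hsplit, ← mul_assoc, ← pow_succ',
              Nat.sub_add_cancel (Nat.one_le_iff_ne_zero.2 hα0),
              Finset.mul_prod_erase univ (fun i => p i ^ α i) (mem_univ i₀)]
          rw [hsum, ← hprod]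
          ring
      simp only [step2]
      rw [← Finset.sum_mul, hp1, ← Finset.sum_mul]
      push_cast [desc_rec N (∑ i, α i)]
      ring

/-- The unbiased estimator `U_N Q` for a (homogeneous degree-`d`) polynomial `Q`,
evaluated at a fingerprint `φ`. -/
noncomputable def estU {n : ℕ} (N d : ℕ) (Q : MvPolynomial (Fin n) ℝ)
    (φ : Fin n → ℕ) : ℝ :=
  ∑ α ∈ Q.support, Q.coeff α *
    (((N - d).factorial : ℝ) * ∏ i, ((α i).factorial : ℝ)) / (N.factorial : ℝ) *
    ∏ i, ((φ i).choose (α i) : ℝ)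

theorem stmt10 {n : ℕ} (d N : ℕ) (hN : d ≤ N)
    (Q : MvPolynomial (Fin n) ℝ) (hQ : Q.IsHomogeneous d)
    (p : Fin n → ℝ) (hp0 : ∀ i, 0 ≤ p i) (hp1 : ∑ i, p i = 1) :
    ∑ s : Fin N → Fin n, (∏ j, p (s j)) * estU N d Q (fingerprint s)
    = MvPolynomial.eval p Q := by
  rw [MvPolynomial.eval_eq']
  simp only [estU, Finset.mul_sum]
  rw [Finset.sum_comm]
  apply Finset.sum_congr rfl
  intro α hα
  have hdeg : ∑ i, α i = d := by
    have h := hQ (MvPolynomial.mem_support_iff.1 hα)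
    change (Finsupp.weight fun _ => 1) α = d at h
    rw [← Finsupp.degree_eq_weight_one] at h
    rw [← h, Finsupp.degree]
    exact (Finset.sum_subset (Finset.subset_univ _)
      (fun i _ hi => Finsupp.notMem_support_iff.1 hi)).symm
  have hk := key N p hp1 (fun i => α i)
  rw [show (∑ i, α i) = d from hdeg] at hk
  have hdesc : ∀ s : Fin N → Fin n,
      ∏ i, ((fingerprint s i).descFactorial (α i) : ℝ)
      = (∏ i, ((α i).factorial : ℝ)) * ∏ i, ((fingerprint s i).choose (α i) : ℝ) := by
    intro s
    rw [← Finset.prod_mul_distrib]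
    apply Finset.prod_congr rfl
    intro i _
    exact_mod_cast congrArg (fun m : ℕ => (m : ℝ))
      (Nat.descFactorial_eq_factorial_mul_choose (fingerprint s i) (α i))
  set c := Q.coeff α
  set A := (∏ i, ((α i).factorial : ℝ)) with hA
  set F := (N.factorial : ℝ)
  set Fd := (((N - d).factorial : ℝ))
  set S := ∑ s : Fin N → Fin n, (∏ j, p (s j)) * ∏ i, ((fingerprint s i).choose (α i) : ℝ)
    with hS
  have hAS : A * S = (N.descFactorial d : ℝ) * ∏ i, p i ^ α i := by
    rw [hS, Finset.mul_sum, ← hk]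
    apply Finset.sum_congr rfl
    intro s _
    rw [hdesc s]; ring
  have hcalc : ∀ s : Fin N → Fin n,
      (∏ j, p (s j)) * (c * (Fd * A) / F * ∏ i, ((fingerprint s i).choose (α i) : ℝ))
      = (c * (Fd * A) / F) * ((∏ j, p (s j)) * ∏ i, ((fingerprint s i).choose (α i) : ℝ)) := by
    intro s; ring
  simp only [hcalc]
  rw [← Finset.mul_sum, ← hS]
  have hFd : Fd * (N.descFactorial d : ℝ) = F := by
    have := congrArg (fun m : ℕ => (m : ℝ)) (Nat.factorial_mul_descFactorial hN)
    push_cast at this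
    exact this
  have hAne : A ≠ 0 := by
    rw [hA]
    exact Finset.prod_ne_zero_iff.2 fun i _ => Nat.cast_ne_zero.2 (Nat.factorial_ne_zero _)
  have hFne : F ≠ 0 := Nat.cast_ne_zero.2 (Nat.factorial_ne_zero N)
  have hSeq : S = (N.descFactorial d : ℝ) * (∏ i, p i ^ α i) / A := by
    field_simp
    linarith [hAS]
  have hFdne : Fd ≠ 0 := Nat.cast_ne_zero.2 (Nat.factorial_ne_zero _)
  have hDne : (N.descFactorial d : ℝ) ≠ 0 := by
    refine Nat.cast_ne_zero.2 fun h0 => ?_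
    exact absurd (Nat.descFactorial_eq_zero_iff_lt.1 h0) (not_lt.2 hN)
  rw [hSeq, ← hFd]
  field_simp
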